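/- For every n ≥ 2 and every real number t with 5 + 4t ≥ 0, the evaluation of Q_n at t equals ((1 + √(5+4t))/2)^n + ((1 − √(5+4t))/2)^n. -/
import Mathlib


open Polynomial

/-- The cube polynomials `Q n` of the matchable Lucas cubes. -/
noncomputable def Q : ℕ → Polynomial ℤ
  | 0 => 1
  | 1 => 2 + X
  | 2 => 3 + 2 * X
  | 3 => 4 + 3 * X
  | (n + 4) => Q (n + 3) + (1 + X) * Q (n + 2)

/-- `q n k` : the number of `k`-dimensional induced hypercubes of `Ω_n`,
i.e. the coefficient of `x^k` in `Q n`. -/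
noncomputable def q (n k : ℕ) : ℤ := (Q n).coeff k

theorem eval_Q_real (n : ℕ) (hn : 2 ≤ n) (t : ℝ) (ht : 0 ≤ 5 + 4 * t) :
    Polynomial.aeval t (Q n)
      = ((1 + Real.sqrt (5 + 4 * t)) / 2) ^ n + ((1 - Real.sqrt (5 + 4 * t)) / 2) ^ n := by
  set s := Real.sqrt (5 + 4 * t) with hs
  have hs2 : s ^ 2 = 5 + 4 * t := Real.sq_sqrt ht
  obtain ⟨m, rfl⟩ : ∃ m, n = m + 2 := ⟨n - 2, by omega⟩
  clear hn
  induction m using Nat.strong_induction_on with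
  | _ m ih =>
    match m with
    | 0 =>
      show Polynomial.aeval t (3 + 2 * X) = _
      simp only [map_add, map_mul, map_ofNat, aeval_X]
      linear_combination -hs2 / 2
    | 1 =>
      show Polynomial.aeval t (4 + 3 * X) = _
      simp only [map_add, map_mul, map_ofNat, aeval_X]
      linear_combination (-3 / 4 : ℝ) * hs2
    | (k + 2) =>
      have h1 := ih (k + 1) (by omega)
      have h2 := ih k (by omega)
      show Polynomial.aeval t (Q (k + 3) + (1 + X) * Q (k + 2)) = _
      simp only [map_add, map_mul, map_one, aeval_X, h1, h2]
      have ha : ((1 + s) / 2) ^ (k + 2 + 2) =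
          ((1 + s) / 2) ^ (k + 1 + 2) + (1 + t) * ((1 + s) / 2) ^ (k + 2) := by
        have : ((1 + s) / 2) ^ 2 = (1 + s) / 2 + (1 + t) := by linear_combination hs2 / 4
        calc ((1 + s) / 2) ^ (k + 2 + 2) = ((1 + s) / 2) ^ (k + 2) * ((1 + s) / 2) ^ 2 := by
              ring
          _ = _ := by rw [this]; ring
      have hb : ((1 - s) / 2) ^ (k + 2 + 2) =
          ((1 - s) / 2) ^ (k + 1 + 2) + (1 + t) * ((1 - s) / 2) ^ (k + 2) := by
        have : ((1 - s) / 2) ^ 2 = (1 - s) / 2 + (1 + t) := by linear_combination hs2 / 4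
        calc ((1 - s) / 2) ^ (k + 2 + 2) = ((1 - s) / 2) ^ (k + 2) * ((1 - s) / 2) ^ 2 := by
              ring
          _ = _ := by rw [this]; ring
      rw [ha, hb]; ring
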